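/- Let (x, x₁) be a Mannheim D-pair of type 1 in Minkowski 3-space with x(s₁) = x₁(s₁) + λ·n₁(s₁) for a nonzero constant λ, and let θ be the hyperbolic angle between T and T₁ with tanh θ = λτ_{g₁}/(1+λk_{n₁}) and dθ/ds₁ = k_n·(ds/ds₁) - k_{g₁}. Then the geodesic torsion τ_{g₁} of x₁ satisfies the differential equation τ_{g₁}' = (1/λ)·[ (((1+λk_{n₁})² - λ²τ_{g₁}²)/(1+λk_{n₁})) · ( k_n·(1+λk_{n₁})/cosh θ - k_{g₁} ) + λ²·τ_{g₁}·k_{n₁}'/(1+λk_{n₁}) ], where primes denote d/ds₁. -/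

import Mathlib

noncomputable section

open Real

/-- Minkowski inner product on ℝ³: ⟨u,v⟩ = -u₁v₁ + u₂v₂ + u₃v₃. -/
def mink (u v : Fin 3 → ℝ) : ℝ := -(u 0 * v 0) + u 1 * v 1 + u 2 * v 2

/-- Lorentzian cross product on Minkowski 3-space. -/
def lcross (u v : Fin 3 → ℝ) : Fin 3 → ℝ :=
  ![u 1 * v 2 - u 2 * v 1, u 0 * v 2 - u 2 * v 0, u 1 * v 0 - u 0 * v 1]

lemma hasDerivAt_tanh' (x : ℝ) : HasDerivAt Real.tanh (1 - Real.tanh x ^ 2) x := by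
  have hc : Real.cosh x ≠ 0 := ne_of_gt (Real.cosh_pos x)
  have h := (Real.hasDerivAt_sinh x).div (Real.hasDerivAt_cosh x) hc
  have hfun : (fun y => Real.sinh y / Real.cosh y) = Real.tanh := by
    funext y; rw [Real.tanh_eq_sinh_div_cosh]
  rw [show (Real.sinh / Real.cosh) = (fun y => Real.sinh y / Real.cosh y) from rfl, hfun] at h
  refine h.congr_deriv ?_
  rw [Real.tanh_eq_sinh_div_cosh]
  have := Real.cosh_sq_sub_sinh_sq x
  field_simp

/-- The characterization ODE for the geodesic torsion of a Mannheim partner D-curve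
of type 1 (primes denote d/ds₁). -/
theorem mannheim_type1_characterization
    (kn₁ τg₁ kg₁ kn θ σ : ℝ → ℝ) (lam : ℝ) (hlam : lam ≠ 0)
    (hdk : Differentiable ℝ kn₁) (hdτ : Differentiable ℝ τg₁) (hdθ : Differentiable ℝ θ)
    (hne : ∀ s, 1 + lam * kn₁ s ≠ 0)
    (htanh : ∀ s, Real.tanh (θ s) = lam * τg₁ s / (1 + lam * kn₁ s))
    (hθ' : ∀ s, deriv θ s = kn s * σ s - kg₁ s)
    (hσ : ∀ s, σ s = (1 + lam * kn₁ s) / Real.cosh (θ s)) :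
    ∀ s, deriv τg₁ s =
      (1 / lam) * ((((1 + lam * kn₁ s) ^ 2 - lam ^ 2 * (τg₁ s) ^ 2) / (1 + lam * kn₁ s)) *
          (kn s * (1 + lam * kn₁ s) / Real.cosh (θ s) - kg₁ s)
        + lam ^ 2 * τg₁ s * deriv kn₁ s / (1 + lam * kn₁ s)) := by
  intro s
  -- key functional identity: lam * τg₁ = tanh ∘ θ * (1 + lam * kn₁)
  have hfun : (fun t => lam * τg₁ t) = fun t => Real.tanh (θ t) * (1 + lam * kn₁ t) := by
    funext t
    rw [htanh t, div_mul_eq_mul_div, mul_div_assoc, div_self (hne t), mul_one]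
  -- derivative of LHS
  have hL : HasDerivAt (fun t => lam * τg₁ t) (lam * deriv τg₁ s) s := by
    simpa using ((hdτ s).hasDerivAt.const_mul lam)
  -- derivative of RHS
  have hR : HasDerivAt (fun t => Real.tanh (θ t) * (1 + lam * kn₁ t))
      ((1 - Real.tanh (θ s) ^ 2) * deriv θ s * (1 + lam * kn₁ s)
        + Real.tanh (θ s) * (lam * deriv kn₁ s)) s := by
    have h1 : HasDerivAt (fun t => Real.tanh (θ t))
        ((1 - Real.tanh (θ s) ^ 2) * deriv θ s) s :=
      (hasDerivAt_tanh' (θ s)).comp s (hdθ s).hasDerivAt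
    have h2 : HasDerivAt (fun t => 1 + lam * kn₁ t) (lam * deriv kn₁ s) s := by
      simpa using (((hdk s).hasDerivAt.const_mul lam).const_add 1)
    exact h1.mul h2
  rw [hfun] at hL
  have heq := hL.unique hR
  have hc : Real.cosh (θ s) ≠ 0 := ne_of_gt (Real.cosh_pos (θ s))
  have hθ's : deriv θ s = kn s * (1 + lam * kn₁ s) / Real.cosh (θ s) - kg₁ s := by
    rw [hθ' s, hσ s]; ring
  rw [htanh s, hθ's] at heq
  have hn := hne s
  have h1 : deriv τg₁ s = (1 / lam) * (lam * deriv τg₁ s) := by field_simp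
  rw [h1, heq]
  congr 1
  field_simp
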